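/- Let P > 0 and let λ, k, γ, ν, Ĉ, D̂ be real numbers. Suppose u : ℝ → ℝ is twice continuously differentiable, periodic with period 2P, and satisfies for all θ ∈ ℝ both λk²u''(θ) = (γ/3)u(θ)³ − (ν/2)u(θ)² + Ĉ and (λk²/2)u'(θ)² = (γ/12)u(θ)⁴ − (ν/6)u(θ)³ + Ĉu(θ) + D̂. Then 3γ⟨u⁴⟩ = 5ν⟨u³⟩ − 18Ĉ⟨u⟩ − 12D̂, where ⟨f⟩ = (1/(2P))∫₀^{2P} f(θ)dθ. -/

import Mathlib

/-- `3γ⟨u⁴⟩ = 5ν⟨u³⟩ - 18Ĉ⟨u⟩ - 12D̂` for a 2P-periodic solution of the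
once-integrated steady Gardner equation and its first integral. -/
theorem mean_identity_u4
    (P lam k γ ν C D : ℝ) (hP : 0 < P)
    (u : ℝ → ℝ) (hu : ContDiff ℝ 2 u)
    (hper : Function.Periodic u (2 * P))
    (heq1 : ∀ θ : ℝ, lam * k ^ 2 * iteratedDeriv 2 u θ
      = (γ / 3) * (u θ) ^ 3 - (ν / 2) * (u θ) ^ 2 + C)
    (heq2 : ∀ θ : ℝ, (lam * k ^ 2 / 2) * (deriv u θ) ^ 2
      = (γ / 12) * (u θ) ^ 4 - (ν / 6) * (u θ) ^ 3 + C * u θ + D) :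
    3 * γ * ((1 / (2 * P)) * ∫ θ in (0:ℝ)..(2 * P), (u θ) ^ 4)
      = 5 * ν * ((1 / (2 * P)) * ∫ θ in (0:ℝ)..(2 * P), (u θ) ^ 3)
        - 18 * C * ((1 / (2 * P)) * ∫ θ in (0:ℝ)..(2 * P), u θ)
        - 12 * D := by
  have hu' : ContDiff ℝ ((1:ℕ∞) + 1) u := hu
  have hsplit := contDiff_succ_iff_deriv.mp hu'
  have hud : Differentiable ℝ u := hsplit.1
  have hC1 : ContDiff ℝ 1 (deriv u) := hsplit.2.2
  have hu'd : Differentiable ℝ (deriv u) := hC1.differentiable one_ne_zero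
  have hcu : Continuous u := hu.continuous
  have hcu' : Continuous (deriv u) := hC1.continuous
  have hcu'' : Continuous (deriv (deriv u)) := hC1.continuous_deriv le_rfl
  have hiter : iteratedDeriv 2 u = deriv (deriv u) := by
    rw [iteratedDeriv_succ, iteratedDeriv_one]
  -- derivative of u * u'
  have hf : ∀ θ : ℝ, HasDerivAt (fun θ => u θ * deriv u θ)
      ((deriv u θ) ^ 2 + u θ * deriv (deriv u) θ) θ := by
    intro θ
    have := ((hud θ).hasDerivAt).mul ((hu'd θ).hasDerivAt)
    rw [sq]; exact this
  have hcont : Continuous (fun θ => (deriv u θ) ^ 2 + u θ * deriv (deriv u) θ) :=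
    (hcu'.pow 2).add (hcu.mul hcu'')
  have hper' : Function.Periodic (deriv u) (2 * P) := by
    intro x
    have he : (fun y => u (y + 2 * P)) = u := funext hper
    have h := deriv_comp_add_const u (2 * P) x
    rw [he] at h
    exact h.symm
  have key : (∫ θ in (0:ℝ)..(2 * P), ((deriv u θ) ^ 2 + u θ * deriv (deriv u) θ)) = 0 := by
    rw [intervalIntegral.integral_eq_sub_of_hasDerivAt (fun θ _ => hf θ)
      (hcont.intervalIntegrable _ _)]
    have h1 : u (2 * P) = u 0 := by simpa using hper 0
    have h2 : deriv u (2 * P) = deriv u 0 := by simpa using hper' 0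
    rw [h1, h2]; ring
  -- pointwise identity
  have hpt : ∀ θ : ℝ, lam * k ^ 2 * ((deriv u θ) ^ 2 + u θ * deriv (deriv u) θ)
      = (γ / 2) * (u θ) ^ 4 - (5 * ν / 6) * (u θ) ^ 3 + 3 * C * u θ + 2 * D := by
    intro θ
    have h1 := heq1 θ
    rw [hiter] at h1
    have h2 := heq2 θ
    linear_combination 2 * h2 + u θ * h1
  have hzero : (∫ θ in (0:ℝ)..(2 * P),
      ((γ / 2) * (u θ) ^ 4 - (5 * ν / 6) * (u θ) ^ 3 + 3 * C * u θ + 2 * D)) = 0 := by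
    have : (fun θ => (γ / 2) * (u θ) ^ 4 - (5 * ν / 6) * (u θ) ^ 3 + 3 * C * u θ + 2 * D)
        = fun θ => lam * k ^ 2 * ((deriv u θ) ^ 2 + u θ * deriv (deriv u) θ) := by
      funext θ; rw [hpt θ]
    rw [this, intervalIntegral.integral_const_mul, key, mul_zero]
  have hi4 : IntervalIntegrable (fun θ => (u θ) ^ 4) MeasureTheory.volume 0 (2 * P) :=
    (hcu.pow 4).intervalIntegrable _ _
  have hi3 : IntervalIntegrable (fun θ => (u θ) ^ 3) MeasureTheory.volume 0 (2 * P) :=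
    (hcu.pow 3).intervalIntegrable _ _
  have hi1 : IntervalIntegrable u MeasureTheory.volume 0 (2 * P) :=
    hcu.intervalIntegrable _ _
  have hexp : (∫ θ in (0:ℝ)..(2 * P),
      ((γ / 2) * (u θ) ^ 4 - (5 * ν / 6) * (u θ) ^ 3 + 3 * C * u θ + 2 * D))
      = (γ / 2) * (∫ θ in (0:ℝ)..(2 * P), (u θ) ^ 4)
        - (5 * ν / 6) * (∫ θ in (0:ℝ)..(2 * P), (u θ) ^ 3)
        + 3 * C * (∫ θ in (0:ℝ)..(2 * P), u θ) + 2 * D * (2 * P) := by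
    rw [intervalIntegral.integral_add (((hi4.const_mul _).sub (hi3.const_mul _)).add
        (hi1.const_mul _)) (intervalIntegrable_const),
      intervalIntegral.integral_add ((hi4.const_mul _).sub (hi3.const_mul _))
        (hi1.const_mul _),
      intervalIntegral.integral_sub (hi4.const_mul _) (hi3.const_mul _),
      intervalIntegral.integral_const_mul, intervalIntegral.integral_const_mul,
      intervalIntegral.integral_const_mul, intervalIntegral.integral_const]
    simp [mul_comm]
  rw [hexp] at hzero
  have hPne : (2 * P) ≠ 0 := by positivity
  field_simp
  linarith [hzero]
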